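/- Let U : AddCommGrp ⥤ Type be the forgetful functor on the category of additive commutative groups and for each natural number n let U^n : AddCommGrp ⥤ Type be the functor sending a group A to the type Fin n → U(A) and a homomorphism f to postcomposition with U(f). The map sending a tuple of integers a : Fin n → ℤ to the natural transformation U^n ⟶ U whose component at A sends x : Fin n → A to the sum ∑ i, a i • x i is a bijection between (Fin n → ℤ) and the natural transformations U^n ⟶ U. -/

import Mathlib

open CategoryTheory

/-- The `n`-th power of the forgetful functor on the category of additive commutative groups,
sending a group `A` to `Fin n → A` and a homomorphism to postcomposition with it. -/
def forgetPow (n : ℕ) : AddCommGrpCat.{u} ⥤ Type u where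
  obj A := Fin n → A
  map f := TypeCat.ofHom fun x => fun i => f (x i)

lemma ulift_down_sum {α : Type} [AddCommMonoid α] {ι : Type} (s : Finset ι)
    (g : ι → ULift.{u} α) : (∑ i ∈ s, g i).down = ∑ i ∈ s, (g i).down := by
  induction s using Finset.cons_induction with
  | empty => rfl
  | cons a s h ih => simp [ih]

/-- Reconstruction of the `n`-ary operations `T_U(n, 1) = Nat(Uⁿ, U)` of the Lawvere theory of
abelian groups from the forgetful functor `U` on the category of additive commutative groups:
natural transformations `Uⁿ ⟶ U` correspond exactly to `n`-tuples of integers, via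
`a ↦ (x ↦ ∑ i, a i • x i)`. -/
theorem abelianGroupOperations_bijective (n : ℕ) :
    Function.Bijective (fun a : Fin n → ℤ =>
      ({ app := fun A => TypeCat.ofHom fun x => ∑ i, a i • x i
         naturality := by
           intro A B f
           ext x
           change ∑ i, a i • f (x i) = f (∑ i, a i • x i)
           simp [forgetPow, map_sum, map_zsmul] } :
        forgetPow.{u} n ⟶ forget AddCommGrpCat.{u})) := by
  set G₀ := AddCommGrpCat.of (ULift.{u} (Fin n → ℤ)) with hG₀
  set e : Fin n → G₀ := fun i => ULift.up (Pi.single i 1) with he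
  have key : ∀ (τ : forgetPow.{u} n ⟶ forget AddCommGrpCat.{u})
      (A : AddCommGrpCat.{u}) (x : Fin n → A),
      τ.app A x = ∑ i, ((τ.app G₀ e).down i) • x i := by
    intro τ A x
    let f : ULift.{u} (Fin n → ℤ) →+ A :=
      { toFun := fun v => ∑ i, v.down i • x i
        map_zero' := by simp
        map_add' := by intro v w; simp [add_smul, Finset.sum_add_distrib] }
    have hnat := ConcreteCategory.congr_hom (τ.naturality (AddCommGrpCat.ofHom f)) e
    have hx : (forgetPow.{u} n).map (AddCommGrpCat.ofHom f) e = x := by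
      funext i
      change ∑ j, (e i).down j • x j = x i
      simp [forgetPow, f, e, Pi.single_apply, ite_smul]
    change τ.app A ((forgetPow.{u} n).map (AddCommGrpCat.ofHom f) e) = f (τ.app G₀ e) at hnat
    rw [hx] at hnat
    exact hnat
  have hdown : ∀ a : Fin n → ℤ, (∑ i, a i • e i).down = a := by
    intro a
    have h1 : (∑ i, a i • e i).down = ∑ i, (a i • e i).down :=
      ulift_down_sum Finset.univ _
    have h2 : ∀ c, (a c • e c).down = a c • (Pi.single c 1 : Fin n → ℤ) := fun c => rfl
    funext j
    rw [h1]
    simp only [h2]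
    simp [Pi.single_apply, Finset.sum_apply]
  constructor
  · intro a b hab
    have := ConcreteCategory.congr_hom (congrArg (fun τ : forgetPow.{u} n ⟶ forget AddCommGrpCat.{u} =>
      (τ.app G₀)) hab) e
    change ∑ i, a i • e i = ∑ i, b i • e i at this
    exact (hdown a).symm.trans ((congrArg ULift.down this).trans (hdown b))
  · intro τ
    refine ⟨(τ.app G₀ e).down, ?_⟩
    ext A x
    exact (key τ A x).symm
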